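/- Let R be a ring in which a + b = 1 implies that there exist r, s ∈ R and e ∈ R with 1 + ar ∈ eR, 1 + bs ∈ (1-e)R and eR(1-e) ⊆ J(R). Then R is feckly clean. -/

import Mathlib

def IsMaxTwoSided {R : Type*} [Ring R] (P : TwoSidedIdeal R) : Prop :=
  P ≠ ⊤ ∧ ∀ Q : TwoSidedIdeal R, P < Q → Q = ⊤

def InJac {R : Type*} [Ring R] (x : R) : Prop := x ∈ Ideal.jacobson (⊥ : Ideal R)

def IsFullElem {R : Type*} [Ring R] (u : R) : Prop := TwoSidedIdeal.span ({u} : Set R) = ⊤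

def FecklyCleanElem {R : Type*} [Ring R] (a : R) : Prop :=
  ∃ e u : R, a = e + u ∧ IsFullElem u ∧ ∀ r : R, InJac (e * r * (1 - e))

def FecklyCleanRing (R : Type*) [Ring R] : Prop := ∀ a : R, FecklyCleanElem a

/-- If `x` is in the Jacobson radical, then `1 - x` is a unit. -/
lemma isUnit_one_sub_of_inJac {R : Type*} [Ring R] {x : R} (hx : InJac x) :
    IsUnit (1 - x) := by
  have key : ∀ y : R, InJac y → ∃ z : R, z * (1 - y) = 1 := by
    intro y hy
    obtain ⟨z, hz⟩ := Ideal.mem_jacobson_iff.1 hy (-1)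
    rw [Ideal.mem_bot, sub_eq_zero] at hz
    refine ⟨z, ?_⟩
    calc z * (1 - y) = z * -1 * y + z := by noncomm_ring
      _ = 1 := hz
  obtain ⟨z, hz⟩ := key x hx
  have hzx : InJac (-(z * x)) := neg_mem (Ideal.mul_mem_left _ z hx)
  obtain ⟨w, hw⟩ := key _ hzx
  have hwz : w * z = 1 := by
    have hz' : z = 1 + z * x := by
      rw [mul_sub, mul_one, sub_eq_iff_eq_add] at hz; exact hz
    have : 1 - -(z * x) = z := by conv_rhs => rw [hz', ← sub_neg_eq_add 1 (z * x)]
    rwa [this] at hw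
  have h2 : (1 - x) * z = 1 := by
    have hw' : w = 1 - x := by
      calc w = w * (z * (1 - x)) := by rw [hz, mul_one]
        _ = (w * z) * (1 - x) := by rw [mul_assoc]
        _ = 1 - x := by rw [hwz, one_mul]
    rw [← hw', hwz]
  exact ⟨⟨1 - x, z, h2, hz⟩, rfl⟩

/-- The Jacobson radical (as a left ideal) is closed under right multiplication. -/
lemma inJac_mul_right {R : Type*} [Ring R] {x : R} (hx : InJac x) (y : R) :
    InJac (x * y) :=
  Ideal.mul_mem_right y _ hx

theorem stmt7 {R : Type*} [Ring R]
    (h : ∀ a b : R, a + b = 1 → ∃ r s e : R,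
      (∃ t : R, 1 + a * r = e * t) ∧ (∃ t : R, 1 + b * s = (1 - e) * t) ∧
      ∀ x : R, InJac (e * x * (1 - e))) :
    FecklyCleanRing R := by
  intro a
  obtain ⟨r, s, e, ⟨t₁, ht₁⟩, ⟨t₂, ht₂⟩, hJ⟩ := h a (1 - a) (by noncomm_ring)
  refine ⟨e, a - e, by noncomm_ring, ?_, hJ⟩
  -- fullness of `u = a - e`
  set I : TwoSidedIdeal R := TwoSidedIdeal.span ({a - e} : Set R) with hI
  have hu : a - e ∈ I := TwoSidedIdeal.subset_span rfl
  set c : R := t₁ - r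
  set d : R := t₂ - s
  have h1 : 1 - e * c ∈ I := by
    have : 1 - e * c = -((a - e) * r) := by
      simp only [c]; rw [mul_sub, ← ht₁]; noncomm_ring
    rw [this]
    exact neg_mem (I.mul_mem_right _ _ hu)
  have h2 : 1 - (1 - e) * d ∈ I := by
    have : 1 - (1 - e) * d = (a - e) * s := by
      simp only [d]; rw [mul_sub, ← ht₂]; noncomm_ring
    rw [this]
    exact I.mul_mem_right _ _ hu
  have h3 : 1 - e * c * (1 - e) * d ∈ I := by
    have : 1 - e * c * (1 - e) * d = (1 - e * c) + e * c * (1 - (1 - e) * d) := by noncomm_ring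
    rw [this]
    exact add_mem h1 (I.mul_mem_left _ _ h2)
  have hj : InJac (e * c * (1 - e) * d) := inJac_mul_right (hJ c) d
  obtain ⟨v, hv⟩ := (isUnit_one_sub_of_inJac hj).exists_left_inv
  have hone : (1 : R) ∈ I := by
    have := I.mul_mem_left v _ h3
    rwa [hv] at this
  exact I.eq_top hone
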